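/- Let g(t) = t^9 + t^8 - t^7 + 3t^6 - t^5 + t^4 + 2t^3 - 2t^2 + 3t - 1 (the denominator factor for the pyramid (3,3,3,5)). Then g has a unique root r in (0,1), and g has no other complex root of absolute value r. -/

import Mathlib

theorem stmt_10 :
    ∃ r : ℝ, r ∈ Set.Ioo (0 : ℝ) 1 ∧
      r ^ 9 + r ^ 8 - r ^ 7 + 3 * r ^ 6 - r ^ 5 + r ^ 4 + 2 * r ^ 3 -
        2 * r ^ 2 + 3 * r - 1 = 0 ∧
      (∀ r' : ℝ, r' ∈ Set.Ioo (0 : ℝ) 1 →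
        r' ^ 9 + r' ^ 8 - r' ^ 7 + 3 * r' ^ 6 - r' ^ 5 + r' ^ 4 + 2 * r' ^ 3 -
          2 * r' ^ 2 + 3 * r' - 1 = 0 → r' = r) ∧
      (∀ z : ℂ, z ^ 9 + z ^ 8 - z ^ 7 + 3 * z ^ 6 - z ^ 5 + z ^ 4 + 2 * z ^ 3 -
          2 * z ^ 2 + 3 * z - 1 = 0 → ‖z‖ = r → z = (r : ℂ)) := by
  set f : ℝ → ℝ := fun x => x ^ 9 + x ^ 8 - x ^ 7 + 3 * x ^ 6 - x ^ 5 + x ^ 4 + 2 * x ^ 3 -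
      2 * x ^ 2 + 3 * x - 1 with hf
  have hcont : ContinuousOn f (Set.Icc 0 1) := by fun_prop
  have hmem : (0 : ℝ) ∈ Set.Ioo (f 0) (f 1) := by norm_num [hf]
  obtain ⟨r, hrI, hr0⟩ := intermediate_value_Ioo (by norm_num) hcont hmem
  obtain ⟨hr0', hr1⟩ := hrI
  have hroot : r ^ 9 + r ^ 8 - r ^ 7 + 3 * r ^ 6 - r ^ 5 + r ^ 4 + 2 * r ^ 3 -
      2 * r ^ 2 + 3 * r - 1 = 0 := hr0
  -- h(r) = 1 where h has nonneg coefficients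
  have hhr : r ^ 10 + 2 * r ^ 9 + 2 * r ^ 7 + 2 * r ^ 6 + 3 * r ^ 4 + r ^ 2 + 2 * r = 1 := by
    linear_combination (r + 1) * hroot
  have uniq : ∀ r' : ℝ, r' ∈ Set.Ioo (0 : ℝ) 1 →
      r' ^ 9 + r' ^ 8 - r' ^ 7 + 3 * r' ^ 6 - r' ^ 5 + r' ^ 4 + 2 * r' ^ 3 -
        2 * r' ^ 2 + 3 * r' - 1 = 0 → r' = r := by
    intro r' ⟨h0', h1'⟩ hroot'
    have hhr' : r' ^ 10 + 2 * r' ^ 9 + 2 * r' ^ 7 + 2 * r' ^ 6 + 3 * r' ^ 4 + r' ^ 2 + 2 * r' = 1 := by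
      linear_combination (r' + 1) * hroot'
    rcases lt_trichotomy r' r with h | h | h
    · exfalso
      have p10 := pow_lt_pow_left₀ h h0'.le (n := 10) (by norm_num)
      have p9 := pow_lt_pow_left₀ h h0'.le (n := 9) (by norm_num)
      have p7 := pow_lt_pow_left₀ h h0'.le (n := 7) (by norm_num)
      have p6 := pow_lt_pow_left₀ h h0'.le (n := 6) (by norm_num)
      have p4 := pow_lt_pow_left₀ h h0'.le (n := 4) (by norm_num)
      have p2 := pow_lt_pow_left₀ h h0'.le (n := 2) (by norm_num)
      linarith
    · exact h
    · exfalso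
      have p10 := pow_lt_pow_left₀ h hr0'.le (n := 10) (by norm_num)
      have p9 := pow_lt_pow_left₀ h hr0'.le (n := 9) (by norm_num)
      have p7 := pow_lt_pow_left₀ h hr0'.le (n := 7) (by norm_num)
      have p6 := pow_lt_pow_left₀ h hr0'.le (n := 6) (by norm_num)
      have p4 := pow_lt_pow_left₀ h hr0'.le (n := 4) (by norm_num)
      have p2 := pow_lt_pow_left₀ h hr0'.le (n := 2) (by norm_num)
      linarith
  refine ⟨r, ⟨hr0', hr1⟩, hroot, uniq, ?_⟩
  intro z hz habs
  have hhz : (2 : ℂ) * z + (z ^ 10 + 2 * z ^ 9 + 2 * z ^ 7 + 2 * z ^ 6 + 3 * z ^ 4 + z ^ 2) = 1 := by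
    linear_combination (z + 1) * hz
  set w : ℂ := z ^ 10 + 2 * z ^ 9 + 2 * z ^ 7 + 2 * z ^ 6 + 3 * z ^ 4 + z ^ 2 with hw
  have hpow : ∀ k : ℕ, ‖z ^ k‖ = r ^ k := fun k => by rw [norm_pow, habs]
  have hwle : ‖w‖ ≤ r ^ 10 + 2 * r ^ 9 + 2 * r ^ 7 + 2 * r ^ 6 + 3 * r ^ 4 + r ^ 2 := by
    calc ‖w‖ ≤ ‖z ^ 10 + 2 * z ^ 9 + 2 * z ^ 7 + 2 * z ^ 6 + 3 * z ^ 4‖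
        + ‖z ^ 2‖ := norm_add_le _ _
      _ ≤ ‖z ^ 10 + 2 * z ^ 9 + 2 * z ^ 7 + 2 * z ^ 6‖ + ‖3 * z ^ 4‖
        + ‖z ^ 2‖ := by gcongr; exact norm_add_le _ _
      _ ≤ ‖z ^ 10 + 2 * z ^ 9 + 2 * z ^ 7‖ + ‖2 * z ^ 6‖
        + ‖3 * z ^ 4‖ + ‖z ^ 2‖ := by gcongr; exact norm_add_le _ _
      _ ≤ ‖z ^ 10 + 2 * z ^ 9‖ + ‖2 * z ^ 7‖ + ‖2 * z ^ 6‖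
        + ‖3 * z ^ 4‖ + ‖z ^ 2‖ := by gcongr; exact norm_add_le _ _
      _ ≤ ‖z ^ 10‖ + ‖2 * z ^ 9‖ + ‖2 * z ^ 7‖
        + ‖2 * z ^ 6‖ + ‖3 * z ^ 4‖ + ‖z ^ 2‖ := by
          gcongr; exact norm_add_le _ _
      _ = r ^ 10 + 2 * r ^ 9 + 2 * r ^ 7 + 2 * r ^ 6 + 3 * r ^ 4 + r ^ 2 := by
          simp [norm_mul, hpow]
  have h2z : ‖2 * z‖ = 2 * r := by rw [norm_mul, habs]; norm_num
  have h1 : (1 : ℝ) ≤ 2 * r + ‖w‖ := by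
    have := norm_add_le (2 * z) w
    rw [hhz] at this
    simpa [h2z, habs] using this
  have hweq : ‖w‖ = 1 - 2 * r := by linarith
  have heq : ‖(2 : ℂ) * z + w‖ = ‖(2 : ℂ) * z‖ + ‖w‖ := by
    rw [hhz]
    simp only [h2z, hweq]
    norm_num
  have hray : SameRay ℝ ((2 : ℂ) * z) w := sameRay_iff_norm_add.mpr heq
  have hray1 : SameRay ℝ ((2 : ℂ) * z) (1 : ℂ) := by
    rw [← hhz]
    exact SameRay.rfl.add_right hray
  obtain ⟨a, ha0, haz⟩ := hray1.symm.exists_nonneg_left (by norm_num)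
  -- hray1.symm : SameRay 1 (2z), so a • 1 = 2z
  have hz_eq : z = ((a / 2 : ℝ) : ℂ) := by
    have : (a : ℂ) = 2 * z := by
      simpa using haz
    push_cast
    linear_combination -this / 2
  have : ‖z‖ = a / 2 := by
    rw [hz_eq, Complex.norm_real, Real.norm_eq_abs, abs_of_nonneg (by linarith)]
  rw [hz_eq]
  rw [this] at habs
  rw [habs]
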